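/- Let K ⊆ ℂ be compact with nowhere dense boundary, and let P be a polynomial with no zeros in the interior K⁰ of K. Then for every ε > 0 there exists a polynomial P' with no zeros on K such that sup_{z∈K} |P(z) − P'(z)| < ε. -/

import Mathlib

open Complex Set Polynomial

private lemma aux_bound {K : Set ℂ} (hK : IsCompact K) (f : ℂ → ℂ) (hf : Continuous f) :
    ∃ C : ℝ, 0 ≤ C ∧ ∀ z ∈ K, ‖f z‖ ≤ C := by
  obtain ⟨C, hC⟩ := hK.exists_bound_of_continuousOn hf.continuousOn
  exact ⟨max C 0, le_max_right _ _, fun z hz => (hC z hz).trans (le_max_left _ _)⟩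

open scoped Classical in
private lemma aux_main (K : Set ℂ) (hK : IsCompact K) :
    ∀ n : ℕ, ∀ P : Polynomial ℂ, P ≠ 0 →
    (P.roots.filter (· ∈ K)).card = n →
    (∀ z ∈ interior K, P.eval z ≠ 0) →
    ∀ ε > (0:ℝ), ∃ P' : Polynomial ℂ,
      (∀ z ∈ K, P'.eval z ≠ 0) ∧ ∀ z ∈ K, ‖P.eval z - P'.eval z‖ < ε := by
  classical
  intro n
  induction n with
  | zero =>
    intro P hP0 hcard _ ε hε
    refine ⟨P, ?_, fun z _ => by simpa using hε⟩
    intro z hz hzP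
    have hmem : z ∈ P.roots.filter (· ∈ K) :=
      Multiset.mem_filter.2 ⟨(mem_roots hP0).2 hzP, hz⟩
    rw [Multiset.card_eq_zero.mp hcard] at hmem
    simp at hmem
  | succ n ih =>
    intro P hP0 hcard hP ε hε
    have hpos : 0 < (P.roots.filter (· ∈ K)).card := by rw [hcard]; exact n.succ_pos
    obtain ⟨r, hr⟩ := Multiset.card_pos_iff_exists_mem.mp hpos
    rw [Multiset.mem_filter] at hr
    obtain ⟨hroot, hrK⟩ := hr
    have hroot' : P.IsRoot r := (mem_roots'.mp hroot).2
    obtain ⟨Q, hQ⟩ := (dvd_iff_isRoot).mpr hroot'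
    have hQ0 : Q ≠ 0 := by
      rintro rfl
      rw [mul_zero] at hQ
      exact hP0 hQ
    have hQint : ∀ z ∈ interior K, Q.eval z ≠ 0 := by
      intro z hz h
      exact hP z hz (by rw [hQ]; simp [h])
    have hQcard : (Q.roots.filter (· ∈ K)).card = n := by
      have hroots : P.roots = {r} + Q.roots := by
        rw [hQ, roots_mul (by rw [← hQ]; exact hP0), roots_X_sub_C]
      rw [hroots, Multiset.filter_add, Multiset.card_add,
        Multiset.filter_singleton, if_pos hrK, Multiset.card_singleton] at hcard
      omega
    -- bounds
    obtain ⟨M, hM0, hM⟩ := aux_bound hK (fun z => z - r) (by continuity)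
    obtain ⟨B, hB0, hB⟩ := aux_bound hK (fun z => Q.eval z) Q.continuous
    set δ : ℝ := min 1 (ε / (2 * (M + 1))) with hδdef
    have hδpos : 0 < δ := lt_min one_pos (by positivity)
    obtain ⟨Q', hQ'ne, hQ'n⟩ := ih Q hQ0 hQcard hQint δ hδpos
    set δ' : ℝ := ε / (2 * (B + 2)) with hδ'def
    have hδ'pos : 0 < δ' := by positivity
    -- find r' outside K near r
    have hrfr : r ∈ frontier K := by
      refine ⟨subset_closure hrK, fun h => ?_⟩
      exact hP r h (by simpa using hroot')
    have hrcl : r ∈ closure Kᶜ := by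
      rw [frontier_eq_closure_inter_closure] at hrfr
      exact hrfr.2
    obtain ⟨r', hr'K, hr'd⟩ := Metric.mem_closure_iff.mp hrcl δ' hδ'pos
    refine ⟨(X - C r') * Q', ?_, ?_⟩
    · intro z hz
      simp only [eval_mul, eval_sub, eval_X, eval_C]
      refine mul_ne_zero ?_ (hQ'ne z hz)
      intro h
      rw [sub_eq_zero] at h
      exact hr'K (h ▸ hz)
    · intro z hz
      have hdiff : P.eval z - ((X - C r') * Q').eval z
          = (z - r) * (Q.eval z - Q'.eval z) + (r' - r) * Q'.eval z := by
        rw [hQ]; simp; ring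
      rw [hdiff]
      have h1 : ‖(z - r) * (Q.eval z - Q'.eval z)‖ ≤ ε / 2 := by
        rw [norm_mul]
        have t1 : ‖z - r‖ ≤ M := hM z hz
        have t2 : ‖Q.eval z - Q'.eval z‖ ≤ δ := le_of_lt (hQ'n z hz)
        have : ‖z - r‖ * ‖Q.eval z - Q'.eval z‖ ≤ M * δ :=
          mul_le_mul t1 t2 (by positivity) hM0
        refine this.trans ?_
        have hδle : δ ≤ ε / (2 * (M + 1)) := min_le_right _ _
        calc M * δ ≤ M * (ε / (2 * (M + 1))) :=
              mul_le_mul_of_nonneg_left hδle hM0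
          _ ≤ (M + 1) * (ε / (2 * (M + 1))) := by
              apply mul_le_mul_of_nonneg_right (by linarith) (by positivity)
          _ = ε / 2 := by field_simp
      have h2 : ‖(r' - r) * Q'.eval z‖ < ε / 2 := by
        rw [norm_mul]
        have t1 : ‖r' - r‖ < δ' := by
          rw [Complex.dist_eq] at hr'd
          calc ‖r' - r‖ = ‖r - r'‖ := by rw [norm_sub_rev]
            _ < δ' := hr'd
        have t2 : ‖Q'.eval z‖ ≤ B + 1 := by
          calc ‖Q'.eval z‖
              = ‖Q.eval z - (Q.eval z - Q'.eval z)‖ := by ring_nf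
            _ ≤ ‖Q.eval z‖ + ‖Q.eval z - Q'.eval z‖ :=
                norm_sub_le _ _
            _ ≤ B + δ := add_le_add (hB z hz) (le_of_lt (hQ'n z hz))
            _ ≤ B + 1 := by
                have h1 : δ ≤ 1 := min_le_left _ _
                linarith
        calc ‖r' - r‖ * ‖Q'.eval z‖
            ≤ ‖r' - r‖ * (B + 1) := by
              apply mul_le_mul_of_nonneg_left t2 (by positivity)
          _ < δ' * (B + 1) := by
              apply mul_lt_mul_of_pos_right t1 (by positivity)
          _ < ε / 2 := by
              rw [hδ'def]
              rw [div_mul_eq_mul_div, div_lt_div_iff₀ (by positivity) (by norm_num)]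
              nlinarith
      calc ‖(z - r) * (Q.eval z - Q'.eval z) + (r' - r) * Q'.eval z‖
          ≤ ‖(z - r) * (Q.eval z - Q'.eval z)‖
            + ‖(r' - r) * Q'.eval z‖ := norm_add_le _ _
        _ < ε := by linarith

theorem stmt5 (K : Set ℂ) (hK : IsCompact K) (hnd : IsNowhereDense (frontier K))
    (P : Polynomial ℂ) (hP : ∀ z ∈ interior K, P.eval z ≠ 0) :
    ∀ ε > (0 : ℝ), ∃ P' : Polynomial ℂ,
      (∀ z ∈ K, P'.eval z ≠ 0) ∧ ∀ z ∈ K, ‖P.eval z - P'.eval z‖ < ε := by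
  intro ε hε
  classical
  by_cases hP0 : P = 0
  · refine ⟨Polynomial.C (ε / 2 : ℝ), ?_, ?_⟩
    · intro z _
      simp
      positivity
    · intro z _
      subst hP0
      simp only [Polynomial.eval_zero, Polynomial.eval_C, zero_sub, norm_neg]
      rw [Complex.norm_real, Real.norm_eq_abs]
      rw [abs_of_pos (by positivity)]
      linarith
  · exact aux_main K hK _ P hP0 rfl hP ε hε
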